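/- Let I_0, I_1, ..., I_m be intervals on the real line satisfying I_k ∩ int(conv(I_0 ∪ ... ∪ I_{k−1})) = ∅ for k = 1, 2, ..., m, and let P be a real polynomial of degree ≥ m. Then for every closed subinterval J of int(I_0): N(P;J) + N°(P; I_0∖J) + Σ_{i=1}^m N°(P^{(i)}; I_i) ≤ deg P; in particular (taking J = ∅), Σ_{i=0}^m N°(P^{(i)}; I_i) ≤ deg P. -/

import Mathlib

open Polynomial

-- `NZ P A`: number of zeros of `P` in `A`, counted with multiplicity.
open Classical in
noncomputable def NZ (P : Polynomial ℝ) (A : Set ℝ) : ℕ :=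
  Multiset.card (P.roots.filter (· ∈ A))

-- `ND P A`: number of distinct zeros of `P` in `A` (without multiplicities).
open Classical in
noncomputable def ND (P : Polynomial ℝ) (A : Set ℝ) : ℕ :=
  (P.roots.toFinset.filter (· ∈ A)).card

open Polynomial

lemma rec_aux (P : Polynomial ℝ) (hP' : derivative P ≠ 0) (S : Set ℝ) (hS : S.OrdConnected)
    (c : ℝ → ℕ) (F : Finset ℝ) :
    (∀ x ∈ F, P.IsRoot x) → (∀ x ∈ F, x ∈ S) →
    (∀ x ∈ F, c x ≤ P.rootMultiplicity x) →
    (∀ x ∈ F, 2 ≤ c x → x ∈ interior S) →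
    ∃ M : Multiset ℝ, M ≤ (derivative P).roots ∧ (∀ y ∈ M, y ∈ interior S) ∧
      (∀ y ∈ M, ∃ x ∈ F, y ≤ x) ∧ (∑ x ∈ F, c x) ≤ Multiset.card M + 1 := by
  classical
  induction F using Finset.induction_on_max with
  | empty => intro _ _ _ _; exact ⟨0, by simp⟩
  | insert a s hlt ih =>
    intro h1 h2 h3 h4
    have ha : a ∉ s := fun h => lt_irrefl a (hlt a h)
    have hins : ∀ x ∈ s, x ∈ insert a s := fun x hx => Finset.mem_insert_of_mem hx
    have hamem : a ∈ insert a s := Finset.mem_insert_self a s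
    have hroota : P.IsRoot a := h1 a hamem
    have hmult' : c a - 1 ≤ (derivative P).rootMultiplicity a := by
      rw [derivative_rootMultiplicity_of_root hroota]
      exact Nat.sub_le_sub_right (h3 a hamem) 1
    have hrep : Multiset.replicate (c a - 1) a ≤ (derivative P).roots := by
      rw [← Multiset.le_count_iff_replicate_le, count_roots]
      exact hmult'
    have hrepint : ∀ y ∈ Multiset.replicate (c a - 1) a, y ∈ interior S := by
      intro y hy
      have hne : c a - 1 ≠ 0 := by
        intro h; rw [h] at hy; simp at hy
      have := Multiset.eq_of_mem_replicate hy
      subst this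
      exact h4 y hamem (by omega)
    rcases s.eq_empty_or_nonempty with rfl | hs
    · refine ⟨Multiset.replicate (c a - 1) a, hrep, hrepint, ?_, ?_⟩
      · intro y hy
        have := Multiset.eq_of_mem_replicate hy
        exact ⟨a, hamem, this.le⟩
      · simp only [Finset.sum_insert ha, Finset.sum_empty, Multiset.card_replicate]
        omega
    · obtain ⟨M, hM, hMint, hMle, hMcard⟩ := ih (fun x hx => h1 x (hins x hx))
        (fun x hx => h2 x (hins x hx)) (fun x hx => h3 x (hins x hx))
        (fun x hx h => h4 x (hins x hx) h)
      set b := s.max' hs with hbdef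
      have hbmem : b ∈ s := s.max'_mem hs
      have hba : b < a := hlt b hbmem
      -- Rolle
      obtain ⟨y, hy, hyz⟩ := exists_deriv_eq_zero (f := fun x => P.eval x) hba
        P.continuous.continuousOn
        (by show P.eval b = P.eval a
            rw [(h1 b (hins b hbmem)).eq_zero, hroota.eq_zero])
      rw [Polynomial.deriv] at hyz
      have hyroot : (derivative P).IsRoot y := hyz
      have hby : b < y := hy.1
      have hya : y < a := hy.2
      -- elements of M are ≤ b
      have hMb : ∀ z ∈ M, z ≤ b := by
        intro z hz
        obtain ⟨x, hx, hzx⟩ := hMle z hz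
        exact hzx.trans (s.le_max' x hx)
      have hcountMa : M.count a = 0 := by
        rw [Multiset.count_eq_zero]
        intro h; exact absurd (hMb a h) (not_le.2 hba)
      have hcountMy : M.count y = 0 := by
        rw [Multiset.count_eq_zero]
        intro h; exact absurd (hMb y h) (not_le.2 hby)
      have hay : a ≠ y := (hya.ne).symm
      refine ⟨M + Multiset.replicate (c a - 1) a + {y}, ?_, ?_, ?_, ?_⟩
      · rw [Multiset.le_iff_count]
        intro z
        have hMz := Multiset.le_iff_count.1 hM z
        have hcr : ((derivative P).roots).count z = (derivative P).rootMultiplicity z :=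
          count_roots _
        simp only [Multiset.count_add, Multiset.count_replicate, Multiset.count_singleton]
        split_ifs with hz1 hz2 hz2
        · exact absurd (hz1.trans hz2) hay
        · subst hz1
          rw [hcountMa, hcr]
          omega
        · subst hz2
          rw [hcountMy, hcr]
          have : 0 < (derivative P).rootMultiplicity z :=
            (rootMultiplicity_pos hP').2 hyroot
          omega
        · omega
      · intro z hz
        simp only [Multiset.mem_add, Multiset.mem_singleton] at hz
        rcases hz with (hz | hz) | rfl
        · exact hMint z hz
        · exact hrepint z hz
        · have hIoo : Set.Ioo b a ⊆ interior S := by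
            apply interior_maximal _ isOpen_Ioo
            exact (Set.Ioo_subset_Icc_self).trans (hS.out (h2 b (hins b hbmem)) (h2 a hamem))
          exact hIoo hy
      · intro z hz
        simp only [Multiset.mem_add, Multiset.mem_singleton] at hz
        rcases hz with (hz | hz) | rfl
        · obtain ⟨x, hx, hzx⟩ := hMle z hz
          exact ⟨x, hins x hx, hzx⟩
        · exact ⟨a, hamem, (Multiset.eq_of_mem_replicate hz).le⟩
        · exact ⟨a, hamem, hya.le⟩
      · simp only [Finset.sum_insert ha, Multiset.card_add, Multiset.card_replicate,
          Multiset.card_singleton]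
        omega
open Classical in
lemma key (P : Polynomial ℝ) (hP : P ≠ 0) (hP' : derivative P ≠ 0)
    (I0 : Set ℝ) (hI0 : I0.OrdConnected) (J : Set ℝ) (hJ : J ⊆ interior I0) :
    ∃ J' : Set ℝ, J' ⊆ interior I0 ∧
      NZ P J + ND P (I0 \ J) ≤ NZ (derivative P) J' + 1 := by
  have hNZJ : NZ P J = Multiset.card (P.roots.filter (· ∈ J)) := rfl
  have hNDD : ND P (I0 \ J) = (P.roots.toFinset.filter (· ∈ I0 \ J)).card := by
    unfold ND; congr
  set F : Finset ℝ := P.roots.toFinset.filter (· ∈ I0) with hF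
  set c : ℝ → ℕ := fun x => if x ∈ J then P.rootMultiplicity x else 1 with hc
  have hJI0 : J ⊆ I0 := hJ.trans interior_subset
  have hFroot : ∀ x ∈ F, P.IsRoot x := by
    intro x hx
    rw [hF, Finset.mem_filter, Multiset.mem_toFinset] at hx
    exact (Polynomial.mem_roots hP).1 hx.1
  have hFmem : ∀ x ∈ F, x ∈ I0 := by
    intro x hx
    rw [hF, Finset.mem_filter] at hx
    exact hx.2
  -- the sum of c over F equals NZ P J + ND P (I0 \ J)
  have e1 : ∑ x ∈ F.filter (· ∈ J), c x = Multiset.card (P.roots.filter (· ∈ J)) := by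
    have hFJ : F.filter (· ∈ J) = P.roots.toFinset.filter (· ∈ J) := by
      ext x
      simp only [hF, Finset.mem_filter, Finset.filter_filter]
      exact ⟨fun ⟨h1, _, h3⟩ => ⟨h1, h3⟩, fun ⟨h1, h3⟩ => ⟨h1, hJI0 h3, h3⟩⟩
    rw [hFJ]
    have hcount : ∀ x ∈ P.roots.toFinset.filter (· ∈ J),
        c x = (P.roots.filter (· ∈ J)).count x := by
      intro x hx
      rw [Finset.mem_filter, Multiset.mem_toFinset] at hx
      rw [Multiset.count_filter, if_pos hx.2, count_roots, hc]
      simp only [if_pos hx.2]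
    rw [Finset.sum_congr rfl hcount,
      show P.roots.toFinset.filter (· ∈ J) = (P.roots.filter (· ∈ J)).toFinset from
        (Multiset.toFinset_filter _ _).symm]
    exact Multiset.toFinset_sum_count_eq _
  have e2 : ∑ x ∈ F.filter (fun x => ¬ x ∈ J), c x
      = (P.roots.toFinset.filter (· ∈ I0 \ J)).card := by
    have hFJ : F.filter (fun x => ¬ x ∈ J) = P.roots.toFinset.filter (· ∈ I0 \ J) := by
      ext x
      simp only [hF, Finset.mem_filter, Finset.filter_filter, Set.mem_diff]
    have hone : ∀ x ∈ F.filter (fun x => ¬ x ∈ J), c x = 1 := by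
      intro x hx
      rw [Finset.mem_filter] at hx
      simp only [hc, if_neg hx.2]
    rw [Finset.sum_congr rfl hone, Finset.sum_const, smul_eq_mul, mul_one, hFJ]
  have hsum : ∑ x ∈ F, c x = NZ P J + ND P (I0 \ J) := by
    rw [← Finset.sum_filter_add_sum_filter_not F (· ∈ J), e1, e2, hNZJ, hNDD]
  obtain ⟨M, hM, hMint, _, hMcard⟩ := rec_aux P hP' I0 hI0 c F hFroot hFmem
    (by
      intro x hx
      simp only [hc]
      split_ifs with h
      · exact le_refl _
      · exact (rootMultiplicity_pos hP).2 (hFroot x hx))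
    (by
      intro x hx h2
      simp only [hc] at h2
      split_ifs at h2 with h
      · exact hJ h
      · omega)
  rcases M.empty_or_exists_mem with rfl | ⟨w, hw⟩
  · refine ⟨∅, Set.empty_subset _, ?_⟩
    simp only [Multiset.card_zero] at hMcard
    omega
  · have hne : M.toFinset.Nonempty := ⟨w, Multiset.mem_toFinset.2 hw⟩
    set u := M.toFinset.min' hne with hu
    set v := M.toFinset.max' hne with hv
    have huint : u ∈ interior I0 := hMint u (Multiset.mem_toFinset.1 (M.toFinset.min'_mem hne))
    have hvint : v ∈ interior I0 := hMint v (Multiset.mem_toFinset.1 (M.toFinset.max'_mem hne))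
    have hconv : (interior I0).OrdConnected := by
      have : Convex ℝ I0 := convex_iff_ordConnected.2 hI0
      exact (this.interior).ordConnected
    refine ⟨Set.Icc u v, ?_, ?_⟩
    · intro z hz
      exact hconv.out huint hvint hz
    · have hMfil : M.filter (· ∈ Set.Icc u v) = M := by
        rw [Multiset.filter_eq_self]
        intro z hz
        have hz' := Multiset.mem_toFinset.2 hz
        exact ⟨M.toFinset.min'_le z hz', M.toFinset.le_max' z hz'⟩
      have h2 := Multiset.card_le_card (Multiset.filter_le_filter (· ∈ Set.Icc u v) hM)
      rw [hMfil] at h2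
      have hNZ' : NZ (derivative P) (Set.Icc u v)
          = Multiset.card ((derivative P).roots.filter (· ∈ Set.Icc u v)) := by
        unfold NZ; congr
      omega
open Classical in
lemma ND_mono (Q : Polynomial ℝ) {A B : Set ℝ} (h : A ⊆ B) : ND Q A ≤ ND Q B := by
  unfold ND
  apply Finset.card_le_card
  apply Finset.monotone_filter_right
  exact fun x _ hx => h hx

open Classical in
lemma main_ind : ∀ m : ℕ, ∀ P : Polynomial ℝ, P ≠ 0 → m ≤ P.natDegree →
    ∀ I : ℕ → Set ℝ, (∀ i ≤ m, (I i).OrdConnected) →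
    (∀ k, 1 ≤ k → k ≤ m → I k ∩ interior (convexHull ℝ (⋃ i ∈ Finset.range k, I i)) = ∅) →
    ∀ J : Set ℝ, J ⊆ interior (I 0) →
    NZ P J + ND P (I 0 \ J) + ∑ i ∈ Finset.range m, ND (derivative^[i+1] P) (I (i+1))
      ≤ P.natDegree := by
  intro m
  induction m with
  | zero =>
    intro P hP _ I hI _ J hJ
    simp only [Finset.range_zero, Finset.sum_empty, add_zero]
    -- count roots
    have h1 : NZ P J = Multiset.card (P.roots.filter (· ∈ J)) := rfl
    have h2 : ND P (I 0 \ J) = (P.roots.toFinset.filter (· ∈ I 0 \ J)).card := by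
      unfold ND; congr
    have h3 : (P.roots.toFinset.filter (· ∈ I 0 \ J)).card
        ≤ Multiset.card (P.roots.filter (· ∈ I 0 \ J)) := by
      rw [show P.roots.toFinset.filter (· ∈ I 0 \ J) = (P.roots.filter (· ∈ I 0 \ J)).toFinset
        from (Multiset.toFinset_filter _ _).symm]
      exact Multiset.toFinset_card_le _
    have h4 : P.roots.filter (· ∈ J) + P.roots.filter (· ∈ I 0 \ J) ≤ P.roots := by
      rw [Multiset.filter_add_filter]
      have : (P.roots.filter fun a => a ∈ J ∧ a ∈ I 0 \ J) = 0 := by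
        rw [Multiset.filter_eq_nil]
        rintro a - ⟨haJ, -, haJ'⟩
        exact haJ' haJ
      rw [this, add_zero]
      exact Multiset.filter_le _ _
    have h5 := Multiset.card_le_card h4
    rw [Multiset.card_add] at h5
    have h6 := P.card_roots'
    omega
  | succ m ih =>
    intro P hP hdeg I hI hseq J hJ
    have hnd0 : P.natDegree ≠ 0 := by omega
    have hP' : derivative P ≠ 0 := fun h => hnd0 (natDegree_eq_zero_of_derivative_eq_zero h)
    have hdeg' : (derivative P).natDegree = P.natDegree - 1 :=
      natDegree_eq_of_degree_eq_some (degree_derivative_eq P (by omega))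
    -- the key step
    obtain ⟨J', hJ'sub, hkey⟩ := key P hP hP' (I 0) (hI 0 (by omega)) J hJ
    -- the new interval system
    set K : ℕ → Set ℝ := fun k => if k = 0 then convexHull ℝ (I 0 ∪ I 1) else I (k+1) with hK
    have hK0 : K 0 = convexHull ℝ (I 0 ∪ I 1) := by simp [hK]
    have hKs : ∀ i : ℕ, K (i+1) = I (i+2) := by intro i; simp [hK]
    have hKoc : ∀ i ≤ m, (K i).OrdConnected := by
      intro i hi
      cases i with
      | zero => rw [hK0]; exact (convex_convexHull ℝ _).ordConnected
      | succ j => rw [hKs]; exact hI (j+2) (by omega)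
    have hull_eq : ∀ k : ℕ, 1 ≤ k →
        convexHull ℝ (⋃ i ∈ Finset.range k, K i) = convexHull ℝ (⋃ i ∈ Finset.range (k+1), I i) := by
      intro k hk
      apply Set.Subset.antisymm
      · apply convexHull_min _ (convex_convexHull ℝ _)
        intro x hx
        simp only [Set.mem_iUnion, Finset.mem_range] at hx
        obtain ⟨i, hik, hxi⟩ := hx
        cases i with
        | zero =>
          rw [hK0] at hxi
          refine convexHull_mono ?_ hxi
          apply Set.union_subset
          · intro z hz
            simp only [Set.mem_iUnion, Finset.mem_range]
            exact ⟨0, by omega, hz⟩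
          · intro z hz
            simp only [Set.mem_iUnion, Finset.mem_range]
            exact ⟨1, by omega, hz⟩
        | succ j =>
          rw [hKs] at hxi
          apply subset_convexHull
          simp only [Set.mem_iUnion, Finset.mem_range]
          exact ⟨j+2, by omega, hxi⟩
      · apply convexHull_min _ (convex_convexHull ℝ _)
        intro x hx
        simp only [Set.mem_iUnion, Finset.mem_range] at hx
        obtain ⟨i, hik, hxi⟩ := hx
        match i, hik with
        | 0, _ =>
          apply subset_convexHull
          simp only [Set.mem_iUnion, Finset.mem_range]
          refine ⟨0, by omega, ?_⟩
          rw [hK0]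
          exact subset_convexHull ℝ _ (Set.mem_union_left _ hxi)
        | 1, _ =>
          apply subset_convexHull
          simp only [Set.mem_iUnion, Finset.mem_range]
          refine ⟨0, by omega, ?_⟩
          rw [hK0]
          exact subset_convexHull ℝ _ (Set.mem_union_right _ hxi)
        | (j+2), hik =>
          apply subset_convexHull
          simp only [Set.mem_iUnion, Finset.mem_range]
          refine ⟨j+1, by omega, ?_⟩
          rw [hKs]
          exact hxi
    have hKseq : ∀ k, 1 ≤ k → k ≤ m →
        K k ∩ interior (convexHull ℝ (⋃ i ∈ Finset.range k, K i)) = ∅ := by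
      intro k hk1 hk2
      rw [hull_eq k hk1]
      obtain ⟨j, rfl⟩ : ∃ j, k = j + 1 := ⟨k - 1, by omega⟩
      rw [hKs]
      exact hseq (j+2) (by omega) (by omega)
    have hJ'K : J' ⊆ interior (K 0) := by
      refine hJ'sub.trans (interior_mono ?_)
      rw [hK0]
      exact (Set.subset_union_left).trans (subset_convexHull ℝ _)
    -- apply the induction hypothesis
    have hIH := ih (derivative P) hP' (by omega) K hKoc hKseq J' hJ'K
    -- I 1 is inside K 0 \ J'
    have hI1sub : I 1 ⊆ K 0 \ J' := by
      intro x hx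
      constructor
      · rw [hK0]
        exact subset_convexHull ℝ _ (Set.mem_union_right _ hx)
      · intro hxJ'
        have h1 := hseq 1 (by omega) (by omega)
        have h2 : (⋃ i ∈ Finset.range 1, I i) = I 0 := by simp
        rw [h2] at h1
        have h3 : convexHull ℝ (I 0) = I 0 :=
          (convex_iff_ordConnected.2 (hI 0 (by omega))).convexHull_eq
        rw [h3] at h1
        exact Set.eq_empty_iff_forall_notMem.1 h1 x ⟨hx, hJ'sub hxJ'⟩
    have hND1 : ND (derivative P) (I 1) ≤ ND (derivative P) (K 0 \ J') :=
      ND_mono _ hI1sub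
    -- rewrite the sum
    have hsum_eq : ∑ i ∈ Finset.range (m+1), ND (derivative^[i+1] P) (I (i+1))
        = ∑ i ∈ Finset.range m, ND (derivative^[i+1] (derivative P)) (K (i+1))
          + ND (derivative P) (I 1) := by
      rw [Finset.sum_range_succ']
      congr 1
    have hfin : NZ (derivative P) J' + ND (derivative P) (K 0 \ J')
        + ∑ i ∈ Finset.range m, ND (derivative^[i+1] (derivative P)) (K (i+1))
        ≤ P.natDegree - 1 := by
      rw [← hdeg']
      exact hIH
    omega
theorem stmt4 (m : ℕ) (I : ℕ → Set ℝ) (hI : ∀ i ≤ m, (I i).OrdConnected)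
    (hseq : ∀ k, 1 ≤ k → k ≤ m →
      I k ∩ interior (convexHull ℝ (⋃ i ∈ Finset.range k, I i)) = ∅)
    (P : Polynomial ℝ) (hP : (m : WithBot ℕ) ≤ P.degree) :
    (∀ J : Set ℝ, J.OrdConnected → IsClosed J → J ⊆ interior (I 0) →
      NZ P J + ND P (I 0 \ J) + ∑ i ∈ Finset.Icc 1 m, ND (derivative^[i] P) (I i) ≤
        P.natDegree) ∧
    ∑ i ∈ Finset.range (m + 1), ND (derivative^[i] P) (I i) ≤ P.natDegree := by
  have hP0 : P ≠ 0 := by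
    refine zero_le_degree_iff.mp (le_trans ?_ hP)
    exact_mod_cast Nat.zero_le m
  have hnd : m ≤ P.natDegree := by
    have h := hP
    rw [degree_eq_natDegree hP0] at h
    exact_mod_cast h
  have hs : ∑ i ∈ Finset.Icc 1 m, ND (derivative^[i] P) (I i)
      = ∑ i ∈ Finset.range m, ND (derivative^[i+1] P) (I (i+1)) := by
    rw [← Finset.Ico_add_one_right_eq_Icc, Finset.sum_Ico_eq_sum_range]
    apply Finset.sum_congr (by norm_num)
    intro i _
    rw [Nat.add_comm 1 i]
  constructor
  · intro J _ _ hJ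
    have h := main_ind m P hP0 hnd I hI hseq J hJ
    rw [hs]
    exact h
  · have h := main_ind m P hP0 hnd I hI hseq ∅ (Set.empty_subset _)
    have h0 : NZ P ∅ = 0 := by
      have he : NZ P ∅ = Multiset.card (P.roots.filter (· ∈ (∅ : Set ℝ))) := by
        unfold NZ; congr
      rw [he]
      simp [Multiset.filter_eq_nil]
    have hde : I 0 \ ∅ = I 0 := Set.diff_empty
    rw [h0, hde, zero_add] at h
    rw [Finset.sum_range_succ']
    have hT : ND (derivative^[0] P) (I 0) = ND P (I 0) := by
      rw [Function.iterate_zero_apply]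
    omega
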